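/- Let G = (V, F, E) be a finite self-contained bipartite graph with a causal-ordering decomposition (S^(1), …, S^(n)) whose clusters are C^(1), …, C^(n). Fix k ∈ {1, …, n}, set S_F = S^(k) and S_V = C^(k) ∩ V, and let σ : S_F → S_V be any bijection. Then the intervened bipartite graph G_do(S_F, σ) is self-contained, and the family of clusters of every causal-ordering decomposition of G_do(S_F, σ) equals {C^(i) : i ≠ k} ∪ {{f, σ(f)} : f ∈ S_F}; that is, performing the perfect intervention commutes with causal ordering. -/

import Mathlib

variable {F V : Type*} [Fintype F] [Fintype V] [DecidableEq F] [DecidableEq V]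

/-- The adjacency set `N(S)` of a set `S ⊆ F`, restricted to the vertex set `V'`. -/
def subAdj (E : Finset (F × V)) (V' : Finset V) (S : Finset F) : Finset V :=
  V'.filter fun v => ∃ f ∈ S, (f, v) ∈ E

/-- `S ⊆ F` is a self-contained set (in the bipartite graph with edges `E` whose
variable part is `V'`): `|S| = |N(S)|` and `|S'| ≤ |N(S')|` for every `S' ⊆ S`. -/
def SCSet (E : Finset (F × V)) (V' : Finset V) (S : Finset F) : Prop :=
  S.card = (subAdj E V' S).card ∧ ∀ S' ⊆ S, S'.card ≤ (subAdj E V' S').card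

/-- The bipartite graph with equation part `F'`, variable part `V'` and edges `E`
is self-contained. -/
def SCGraph (E : Finset (F × V)) (F' : Finset F) (V' : Finset V) : Prop :=
  F'.card = V'.card ∧ SCSet E V' F'

/-- `S` is a minimal self-contained subset of `F'` (variable part `V'`). -/
def MinSCSet (E : Finset (F × V)) (F' : Finset F) (V' : Finset V) (S : Finset F) : Prop :=
  S ⊆ F' ∧ S.Nonempty ∧ SCSet E V' S ∧ ∀ S' ⊂ S, S'.Nonempty → ¬ SCSet E V' S'

/-- `S^(1) ∪ ⋯ ∪ S^(i-1)`, the union of the sets preceding index `i`. -/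
def codPrev {n : ℕ} (S : Fin n → Finset F) (i : Fin n) : Finset F :=
  (Finset.univ.filter fun j => j < i).biUnion S

/-- `(S 0, …, S (n-1))` is a causal-ordering decomposition of the bipartite graph
with edges `E` on the full vertex sets. -/
def IsCOD (E : Finset (F × V)) {n : ℕ} (S : Fin n → Finset F) : Prop :=
  Finset.univ.biUnion S = (Finset.univ : Finset F) ∧
  ∀ i : Fin n,
    MinSCSet E (Finset.univ \ codPrev S i)
      (Finset.univ \ subAdj E Finset.univ (codPrev S i)) (S i)

/-- The cluster of `S^(i)`: the pair consisting of `S^(i)` and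
`N(S^(i)) \ N(S^(1) ∪ ⋯ ∪ S^(i-1))`. -/
def codCluster (E : Finset (F × V)) {n : ℕ} (S : Fin n → Finset F) (i : Fin n) :
    Finset F × Finset V :=
  (S i, subAdj E Finset.univ (S i) \ subAdj E Finset.univ (codPrev S i))

/-- The edge set of the intervened bipartite graph `G_do(S_F, σ)`. -/
def doEdges (E : Finset (F × V)) (SF : Finset F) (σ : F → V) : Finset (F × V) :=
  E.filter (fun e => e.1 ∉ SF) ∪ SF.image fun f => (f, σ f)


set_option linter.unusedSectionVars false
set_option linter.unusedVariables false
set_option linter.unnecessarySimpa false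
set_option linter.dupNamespace false
set_option maxHeartbeats 1000000

namespace CO

open Finset

variable (E : Finset (F × V))

/-- full adjacency -/
def nb (S : Finset F) : Finset V := subAdj E Finset.univ S

/-- self-contained in the top graph (Hall part is automatic there) -/
def good (S : Finset F) : Prop := S.card = (nb E S).card

variable {E}

lemma mem_nb {v : V} {S : Finset F} : v ∈ nb E S ↔ ∃ f ∈ S, (f, v) ∈ E := by
  simp [nb, subAdj]

lemma subAdj_eq {V' : Finset V} {S : Finset F} : subAdj E V' S = nb E S ∩ V' := by
  ext v; simp [subAdj, mem_nb, and_comm]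

lemma nb_mono {S T : Finset F} (h : S ⊆ T) : nb E S ⊆ nb E T := by
  intro v hv; rw [mem_nb] at *; obtain ⟨f, hf, hfv⟩ := hv; exact ⟨f, h hf, hfv⟩

lemma nb_union {S T : Finset F} : nb E (S ∪ T) = nb E S ∪ nb E T := by
  ext v; simp [mem_nb, or_and_right, exists_or]

lemma nb_empty : nb E (∅ : Finset F) = ∅ := by
  ext v; simp [mem_nb]

lemma subAdj_sdiff_nb {P S : Finset F} :
    subAdj E (Finset.univ \ nb E P) S = nb E S \ nb E P := by
  rw [subAdj_eq]; ext v; simp [Finset.mem_sdiff, and_comm]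

/-- Hall condition in the top graph, from self-containedness. -/
lemma hall_of_SCGraph (hG : SCGraph E Finset.univ Finset.univ) (S : Finset F) :
    S.card ≤ (nb E S).card := hG.2.2 S (Finset.subset_univ S)

lemma good_univ (hG : SCGraph E Finset.univ Finset.univ) :
    good E (Finset.univ : Finset F) := hG.2.1

/-- lattice property of self-contained sets -/
lemma good_lattice (hall : ∀ S : Finset F, S.card ≤ (nb E S).card)
    {S T : Finset F} (hS : good E S) (hT : good E T) :
    good E (S ∪ T) ∧ good E (S ∩ T) ∧ nb E (S ∩ T) = nb E S ∩ nb E T := by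
  have h1 : nb E (S ∩ T) ⊆ nb E S ∩ nb E T :=
    Finset.subset_inter (nb_mono Finset.inter_subset_left)
      (nb_mono Finset.inter_subset_right)
  have c1 : (S ∩ T).card ≤ (nb E (S ∩ T)).card := hall _
  have c2 : (nb E (S ∩ T)).card ≤ (nb E S ∩ nb E T).card := Finset.card_le_card h1
  have c3 : (S ∪ T).card ≤ (nb E (S ∪ T)).card := hall _
  have e1 : (nb E (S ∪ T)).card + (nb E S ∩ nb E T).card = (nb E S).card + (nb E T).card := by
    rw [nb_union]; exact Finset.card_union_add_card_inter _ _
  have e2 : (S ∪ T).card + (S ∩ T).card = S.card + T.card :=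
    Finset.card_union_add_card_inter _ _
  have hi : nb E S ∩ nb E T ⊆ nb E S := Finset.inter_subset_left
  have hile : (nb E S ∩ nb E T).card ≤ (nb E S).card := Finset.card_le_card hi
  -- chain
  have key : (S ∩ T).card = (nb E (S ∩ T)).card ∧ (S ∪ T).card = (nb E (S ∪ T)).card ∧
      (nb E (S ∩ T)).card = (nb E S ∩ nb E T).card := by
    unfold good at hS hT
    omega
  refine ⟨key.2.1, key.1, ?_⟩
  exact Finset.eq_of_subset_of_card_le h1 (le_of_eq key.2.2.symm)

lemma good_union (hall : ∀ S : Finset F, S.card ≤ (nb E S).card)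
    {S T : Finset F} (hS : good E S) (hT : good E T) : good E (S ∪ T) :=
  (good_lattice hall hS hT).1

lemma good_inter (hall : ∀ S : Finset F, S.card ≤ (nb E S).card)
    {S T : Finset F} (hS : good E S) (hT : good E T) : good E (S ∩ T) :=
  (good_lattice hall hS hT).2.1

lemma nb_inter (hall : ∀ S : Finset F, S.card ≤ (nb E S).card)
    {S T : Finset F} (hS : good E S) (hT : good E T) :
    nb E (S ∩ T) = nb E S ∩ nb E T :=
  (good_lattice hall hS hT).2.2

end CO

namespace CO
open Finset
variable {E : Finset (F × V)}

/-- In a self-contained top graph, SC-ness in the residual graph at a good set `P`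
is equivalent to `S ∪ P` being good. -/
lemma residual_SCSet_iff (hall : ∀ S : Finset F, S.card ≤ (nb E S).card)
    {P S : Finset F} (hP : good E P) (hdisj : Disjoint S P) :
    SCSet E (Finset.univ \ nb E P) S ↔ good E (S ∪ P) := by
  have hres : ∀ S' : Finset F, Disjoint S' P →
      (subAdj E (Finset.univ \ nb E P) S').card + P.card = (nb E (S' ∪ P)).card ∧
      (S' ∪ P).card = S'.card + P.card := by
    intro S' hd
    constructor
    · rw [subAdj_sdiff_nb, nb_union, show P.card = (nb E P).card from hP]
      have : nb E S' \ nb E P = (nb E S' ∪ nb E P) \ nb E P := by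
        ext v; simp [Finset.mem_sdiff]; tauto
      rw [this, Finset.card_sdiff_add_card_eq_card Finset.subset_union_right]
    · exact Finset.card_union_of_disjoint hd
  constructor
  · rintro ⟨hcard, -⟩
    have h := hres S hdisj
    unfold good; omega
  · intro hg
    constructor
    · have h := hres S hdisj
      unfold good at hg; omega
    · intro S' hS'
      have hd' : Disjoint S' P := Finset.disjoint_of_subset_left hS' hdisj
      have h := hres S' hd'
      have : (S' ∪ P).card ≤ (nb E (S' ∪ P)).card := hall _
      omega

section COD

variable {n : ℕ} {S : Fin n → Finset F}

/-- natural-number indexed prefix union -/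
def cp {m : ℕ} (T : Fin m → Finset F) (a : ℕ) : Finset F :=
  (Finset.univ.filter fun t : Fin m => (t : ℕ) < a).biUnion T

lemma codPrev_eq_cp {m : ℕ} (T : Fin m → Finset F) (i : Fin m) :
    codPrev T i = cp T (i : ℕ) := by
  unfold codPrev cp
  congr 1

lemma cp_zero {m : ℕ} (T : Fin m → Finset F) : cp T 0 = ∅ := by
  simp [cp]

lemma cp_succ {m : ℕ} (T : Fin m → Finset F) {a : ℕ} (ha : a < m) :
    cp T (a + 1) = cp T a ∪ T ⟨a, ha⟩ := by
  unfold cp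
  ext f
  simp only [Finset.mem_biUnion, Finset.mem_filter, Finset.mem_univ, true_and,
    Finset.mem_union]
  constructor
  · rintro ⟨t, ht, htf⟩
    rcases Nat.lt_or_ge (t : ℕ) a with h | h
    · exact Or.inl ⟨t, h, htf⟩
    · have : t = ⟨a, ha⟩ := Fin.ext (show (t : ℕ) = a by omega)
      exact Or.inr (this ▸ htf)
  · rintro (⟨t, ht, htf⟩ | h)
    · exact ⟨t, by omega, htf⟩
    · exact ⟨⟨a, ha⟩, by simpa using Nat.lt_succ_self a, h⟩

lemma cp_of_ge {m : ℕ} (T : Fin m → Finset F) {a : ℕ} (ha : m ≤ a) :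
    cp T a = Finset.univ.biUnion T := by
  unfold cp
  congr 1
  ext t
  simp only [Finset.mem_filter, Finset.mem_univ, true_and, iff_true]
  omega

lemma cp_mono {m : ℕ} {T : Fin m → Finset F} {a b : ℕ} (hab : a ≤ b) : cp T a ⊆ cp T b := by
  unfold cp
  apply Finset.biUnion_subset_biUnion_of_subset_left
  intro t
  simp only [Finset.mem_filter, Finset.mem_univ, true_and]
  omega

variable (hall : ∀ S' : Finset F, S'.card ≤ (nb E S').card) (hS : IsCOD E S)
include hall hS

lemma disj_S_cp (i : Fin n) : Disjoint (S i) (cp S (i : ℕ)) := by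
  have h := (hS.2 i).1
  rw [codPrev_eq_cp] at h
  rw [Finset.disjoint_right]
  intro f hf hfi
  exact (Finset.mem_sdiff.mp (h hfi)).2 hf

lemma good_cp : ∀ a : ℕ, good E (cp S a) := by
  intro a
  induction a with
  | zero => rw [cp_zero]; unfold good; rw [nb_empty]; rfl
  | succ a ih =>
    rcases Nat.lt_or_ge a n with ha | ha
    · rw [cp_succ S ha]
      have hmin := hS.2 ⟨a, ha⟩
      have hdisj := disj_S_cp hall hS ⟨a, ha⟩
      rw [codPrev_eq_cp] at hmin
      have := (residual_SCSet_iff hall ih hdisj).mp hmin.2.2.1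
      rw [Finset.union_comm]
      exact this
    · rw [cp_of_ge S (le_of_lt (Nat.lt_succ_of_le ha)), ← cp_of_ge S ha]
      exact ih

lemma good_cp_union (i : Fin n) : good E (cp S (i : ℕ) ∪ S i) := by
  have := good_cp hall hS ((i : ℕ) + 1)
  rwa [cp_succ S i.isLt, Fin.eta] at this

lemma S_subset_cp_succ (i : Fin n) : S i ⊆ cp S ((i : ℕ) + 1) := by
  rw [cp_succ S i.isLt, Fin.eta]; exact Finset.subset_union_right


end COD
end CO

namespace CO
open Finset

open Classical in
/-- the minimal self-contained set containing `f` (as a filter) -/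
noncomputable def mf (E : Finset (F × V)) (f : F) : Finset F :=
  Finset.univ.filter fun g => ∀ A : Finset F, good E A → f ∈ A → g ∈ A

open Classical in
/-- the intrinsic cluster (equation part) of `f` -/
noncomputable def cls (E : Finset (F × V)) (f : F) : Finset F :=
  Finset.univ.filter fun g => g ∈ mf E f ∧ f ∈ mf E g

variable {E : Finset (F × V)}

lemma mem_mf {f g : F} : g ∈ mf E f ↔ ∀ A : Finset F, good E A → f ∈ A → g ∈ A := by
  simp [mf]

lemma mem_cls {f g : F} : g ∈ cls E f ↔ g ∈ mf E f ∧ f ∈ mf E g := by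
  simp [cls]

lemma self_mem_mf (f : F) : f ∈ mf E f := mem_mf.mpr fun A _ h => h

lemma mf_subset {f : F} {A : Finset F} (hA : good E A) (hf : f ∈ A) : mf E f ⊆ A :=
  fun g hg => mem_mf.mp hg A hA hf

lemma good_mf (hG : SCGraph E Finset.univ Finset.univ) (f : F) : good E (mf E f) := by
  classical
  have hall := hall_of_SCGraph hG
  set cands := Finset.univ.powerset.filter (fun A : Finset F => good E A ∧ f ∈ A) with hc
  have hne : cands.Nonempty :=
    ⟨Finset.univ, by simp [hc, good_univ hG]⟩
  obtain ⟨A, hA, hmin⟩ := Finset.exists_min_image cands Finset.card hne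
  rw [hc, Finset.mem_filter] at hA
  have hAsub : ∀ B : Finset F, good E B → f ∈ B → A ⊆ B := by
    intro B hB hfB
    have hAB : good E (A ∩ B) := good_inter hall hA.2.1 hB
    have hmem : A ∩ B ∈ cands := by
      simp only [hc, Finset.mem_filter, Finset.mem_powerset]
      exact ⟨Finset.subset_univ _, hAB, Finset.mem_inter.mpr ⟨hA.2.2, hfB⟩⟩
    have := hmin _ hmem
    have : A ∩ B = A :=
      Finset.eq_of_subset_of_card_le Finset.inter_subset_left (by omega)
    intro x hx
    exact Finset.mem_inter.mp (this ▸ hx) |>.2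
  have : mf E f = A := by
    apply Finset.Subset.antisymm
    · exact mf_subset hA.2.1 hA.2.2
    · intro g hg
      rw [mem_mf]
      intro B hB hfB
      exact hAsub B hB hfB hg
  rw [this]; exact hA.2.1

section COD
variable {n : ℕ} {S : Fin n → Finset F}
variable (hG : SCGraph E Finset.univ Finset.univ) (hS : IsCOD E S)
include hG hS

lemma S_subset_mf (i : Fin n) {f : F} (hf : f ∈ S i) : S i ⊆ mf E f := by
  have hall := hall_of_SCGraph hG
  set P := cp S (i : ℕ) with hP
  have hPg : good E P := good_cp hall hS _
  have hdisj : Disjoint (S i) P := disj_S_cp hall hS i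
  have hmfg : good E (mf E f) := good_mf hG f
  have hfP : f ∉ P := Finset.disjoint_left.mp hdisj hf
  -- the residual trace of mf E f
  set X := mf E f \ P with hX
  have hXP : X ∪ P = mf E f ∪ P := by
    ext g; simp only [hX, Finset.mem_union, Finset.mem_sdiff]; tauto
  have hXg : good E (X ∪ P) := by rw [hXP]; exact good_union hall hmfg hPg
  -- the intersection with S i is residual-SC
  set C := X ∩ S i with hC
  have hCP : good E (C ∪ P) := by
    have h1 : good E ((X ∪ P) ∩ (S i ∪ P)) :=
      good_inter hall hXg (by rw [Finset.union_comm]; exact good_cp_union hall hS i)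
    have h2 : (X ∪ P) ∩ (S i ∪ P) = C ∪ P := by
      ext g; simp only [hC, Finset.mem_union, Finset.mem_inter]; tauto
    rwa [h2] at h1
  have hCdisj : Disjoint C P :=
    Finset.disjoint_of_subset_left Finset.inter_subset_right hdisj
  have hCsc : SCSet E (Finset.univ \ nb E P) C :=
    (residual_SCSet_iff hall hPg hCdisj).mpr hCP
  have hCsub : C ⊆ S i := Finset.inter_subset_right
  have hCne : C.Nonempty := ⟨f, by
    simp only [hC, hX, Finset.mem_inter, Finset.mem_sdiff]
    exact ⟨⟨self_mem_mf f, hfP⟩, hf⟩⟩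
  have hmin := hS.2 i
  rw [codPrev_eq_cp, ← hP] at hmin
  have hCeq : C = S i := by
    by_contra hne
    exact hmin.2.2.2 C (Finset.ssubset_iff_subset_ne.mpr ⟨hCsub, hne⟩) hCne hCsc
  intro g hg
  have : g ∈ C := hCeq ▸ hg
  exact (Finset.mem_sdiff.mp (Finset.mem_inter.mp this).1).1

lemma S_eq_cls (i : Fin n) {f : F} (hf : f ∈ S i) : S i = cls E f := by
  have hall := hall_of_SCGraph hG
  apply Finset.Subset.antisymm
  · intro g hg
    rw [mem_cls]
    exact ⟨S_subset_mf hG hS i hf hg, S_subset_mf hG hS i hg hf⟩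
  · intro g hg
    rw [mem_cls] at hg
    have hPi : good E (cp S (i : ℕ) ∪ S i) := good_cp_union hall hS i
    have hgPi : g ∈ cp S (i : ℕ) ∪ S i :=
      mf_subset hPi (Finset.mem_union_right _ hf) hg.1
    rcases Finset.mem_union.mp hgPi with hgP | hgS
    · exfalso
      obtain ⟨j, hj, hgj⟩ := by
        simpa only [cp, Finset.mem_biUnion, Finset.mem_filter, Finset.mem_univ,
          true_and] using hgP
      have hfj : f ∈ cp S ((j : ℕ) + 1) := by
        have hPj : good E (cp S (j : ℕ) ∪ S j) := good_cp_union hall hS j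
        have : f ∈ cp S (j : ℕ) ∪ S j :=
          mf_subset hPj (Finset.mem_union_right _ hgj) hg.2
        rwa [cp_succ S j.isLt, Fin.eta]
      have : f ∈ cp S (i : ℕ) := cp_mono (by omega) hfj
      exact Finset.disjoint_left.mp (disj_S_cp hall hS i) hf this
    · exact hgS

lemma cluster_intrinsic (i : Fin n) {f : F} (hf : f ∈ S i) :
    codCluster E S i = (cls E f, nb E (mf E f) \ nb E (mf E f \ cls E f)) := by
  have hall := hall_of_SCGraph hG
  have hcls : S i = cls E f := S_eq_cls hG hS i hf
  set P := cp S (i : ℕ) with hP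
  have hPg : good E P := good_cp hall hS _
  have hdisj : Disjoint (S i) P := disj_S_cp hall hS i
  have hmfg : good E (mf E f) := good_mf hG f
  have hsub : mf E f ⊆ P ∪ S i := by
    have hPi : good E (P ∪ S i) := by
      rw [hP]; exact good_cp_union hall hS i
    exact mf_subset hPi (Finset.mem_union_right _ hf)
  have hSsub : S i ⊆ mf E f := S_subset_mf hG hS i hf
  have h1 : mf E f \ cls E f = mf E f ∩ P := by
    rw [← hcls]
    ext g
    simp only [Finset.mem_sdiff, Finset.mem_inter]
    constructor
    · rintro ⟨hg, hgS⟩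
      refine ⟨hg, ?_⟩
      rcases Finset.mem_union.mp (hsub hg) with h | h
      · exact h
      · exact absurd h hgS
    · rintro ⟨hg, hgP⟩
      exact ⟨hg, fun hgS => Finset.disjoint_left.mp hdisj hgS hgP⟩
  have h2 : nb E (mf E f ∩ P) = nb E (mf E f) ∩ nb E P := nb_inter hall hmfg hPg
  have hdecomp : mf E f = (mf E f ∩ P) ∪ S i := by
    ext g
    simp only [Finset.mem_union, Finset.mem_inter]
    constructor
    · intro hg
      rcases Finset.mem_union.mp (hsub hg) with h | h
      · exact Or.inl ⟨hg, h⟩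
      · exact Or.inr h
    · rintro (⟨h, -⟩ | h)
      · exact h
      · exact hSsub h
  have hVeq : nb E (S i) \ nb E P = nb E (mf E f) \ nb E (mf E f \ cls E f) := by
    rw [h1]
    apply Finset.Subset.antisymm
    · intro v hv
      rw [Finset.mem_sdiff] at hv ⊢
      refine ⟨nb_mono hSsub hv.1, fun hv2 => hv.2 ?_⟩
      rw [h2] at hv2
      exact (Finset.mem_inter.mp hv2).2
    · intro v hv
      rw [Finset.mem_sdiff] at hv ⊢
      have hvP : v ∉ nb E P := by
        intro h
        exact hv.2 (h2 ▸ Finset.mem_inter.mpr ⟨hv.1, h⟩)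
      refine ⟨?_, hvP⟩
      have := hv.1
      rw [hdecomp, nb_union] at this
      rcases Finset.mem_union.mp this with h | h
      · exact absurd h hv.2
      · exact h
  have hprev : subAdj E Finset.univ (codPrev S i) = nb E P := by
    rw [hP, ← codPrev_eq_cp]; rfl
  refine Prod.ext hcls ?_
  show subAdj E Finset.univ (S i) \ subAdj E Finset.univ (codPrev S i) = _
  rw [hprev]
  exact hVeq

end COD

/-- Uniqueness of causal ordering: any cluster of one COD is a cluster of any other. -/
lemma cluster_unique (hG : SCGraph E Finset.univ Finset.univ)
    {n m : ℕ} {S : Fin n → Finset F} {T : Fin m → Finset F}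
    (hS : IsCOD E S) (hT : IsCOD E T) (i : Fin n) :
    ∃ j : Fin m, codCluster E S i = codCluster E T j := by
  obtain ⟨f, hf⟩ := (hS.2 i).2.1
  have : f ∈ Finset.univ.biUnion T := hT.1 ▸ Finset.mem_univ f
  obtain ⟨j, -, hj⟩ := Finset.mem_biUnion.mp this
  exact ⟨j, (cluster_intrinsic hG hS i hf).trans (cluster_intrinsic hG hT j hj).symm⟩

end CO

namespace CO
open Finset

lemma nb_do (E : Finset (F × V)) (SF : Finset F) (σ : F → V) (S' : Finset F) :
    nb (doEdges E SF σ) S' = nb E (S' \ SF) ∪ (S' ∩ SF).image σ := by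
  ext v
  simp only [mem_nb, doEdges, Finset.mem_union, Finset.mem_filter, Finset.mem_image,
    Finset.mem_sdiff, Finset.mem_inter, Prod.mk.injEq]
  constructor
  · rintro ⟨f, hf, (⟨hE, hnSF⟩ | ⟨a, ha, haf, hav⟩)⟩
    · exact Or.inl ⟨f, ⟨hf, hnSF⟩, hE⟩
    · exact Or.inr ⟨a, ⟨haf ▸ hf, ha⟩, hav⟩
  · rintro (⟨f, ⟨hf, hnSF⟩, hE⟩ | ⟨a, ⟨ha, haSF⟩, hav⟩)
    · exact ⟨f, hf, Or.inl ⟨hE, hnSF⟩⟩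
    · exact ⟨a, ha, Or.inr ⟨a, haSF, rfl, hav⟩⟩

lemma nb_do_of_disjoint {E : Finset (F × V)} {SF S' : Finset F} (σ : F → V)
    (h : Disjoint S' SF) : nb (doEdges E SF σ) S' = nb E S' := by
  rw [nb_do, Finset.sdiff_eq_self_of_disjoint h,
    Finset.inter_comm, (Finset.disjoint_iff_inter_eq_empty.mp h.symm)]
  simp

lemma subAdj_do_of_disjoint {E : Finset (F × V)} {SF S' : Finset F} (σ : F → V)
    (h : Disjoint S' SF) (V' : Finset V) :
    subAdj (doEdges E SF σ) V' S' = subAdj E V' S' := by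
  rw [subAdj_eq, subAdj_eq, nb_do_of_disjoint σ h]

lemma SCSet_do_of_disjoint {E : Finset (F × V)} {SF S' : Finset F} (σ : F → V)
    (h : Disjoint S' SF) (V' : Finset V) :
    SCSet (doEdges E SF σ) V' S' ↔ SCSet E V' S' := by
  unfold SCSet
  have hsub : ∀ S'' ⊆ S', subAdj (doEdges E SF σ) V' S'' = subAdj E V' S'' :=
    fun S'' hS'' => subAdj_do_of_disjoint σ (Finset.disjoint_of_subset_left hS'' h) V'
  rw [hsub S' (Finset.Subset.refl S')]
  constructor
  · rintro ⟨h1, h2⟩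
    exact ⟨h1, fun S'' hS'' => (hsub S'' hS'') ▸ h2 S'' hS''⟩
  · rintro ⟨h1, h2⟩
    exact ⟨h1, fun S'' hS'' => (hsub S'' hS'') ▸ h2 S'' hS''⟩

lemma MinSCSet_do_of_disjoint {E : Finset (F × V)} {SF X : Finset F} (σ : F → V)
    (h : Disjoint X SF) (F' : Finset F) (V' : Finset V) :
    MinSCSet (doEdges E SF σ) F' V' X ↔ MinSCSet E F' V' X := by
  unfold MinSCSet
  rw [SCSet_do_of_disjoint σ h]
  constructor
  · rintro ⟨h1, h2, h3, h4⟩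
    refine ⟨h1, h2, h3, fun S' hS' hne hsc => h4 S' hS' hne ?_⟩
    rwa [SCSet_do_of_disjoint σ (Finset.disjoint_of_subset_left hS'.subset h)]
  · rintro ⟨h1, h2, h3, h4⟩
    refine ⟨h1, h2, h3, fun S' hS' hne hsc => h4 S' hS' hne ?_⟩
    rwa [SCSet_do_of_disjoint σ (Finset.disjoint_of_subset_left hS'.subset h) V'] at hsc

section DoGraph

variable {E : Finset (F × V)} {n : ℕ} {S : Fin n → Finset F} {k : Fin n} {σ : F → V}

/-- Hall's condition for the intervened graph. -/
lemma hall_do (hG : SCGraph E Finset.univ Finset.univ) (hS : IsCOD E S)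
    (hinj : Set.InjOn σ ((S k : Finset F) : Set F))
    (hmap : ∀ f ∈ S k, σ f ∈ nb E (S k) \ nb E (cp S (k : ℕ)))
    (S' : Finset F) : S'.card ≤ (nb (doEdges E (S k) σ) S').card := by
  have hall := hall_of_SCGraph hG
  set SF := S k with hSF
  set P := cp S (k : ℕ) with hP
  set VP := nb E SF \ nb E P with hVP
  set A := S' \ SF with hA
  set B := S' ∩ SF with hB
  rw [nb_do, ← hA, ← hB]
  set Pk := P ∪ SF with hPk
  have hPg : good E P := good_cp hall hS _
  have hPkg : good E Pk := by
    rw [hPk, hP, hSF]; exact good_cp_union hall hS k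
  -- |B.image σ| = |B|
  have hBcard : (B.image σ).card = B.card := by
    apply Finset.card_image_of_injOn
    exact hinj.mono (by rw [hB]; exact_mod_cast Finset.inter_subset_right)
  have hBVP : B.image σ ⊆ VP := by
    intro v hv
    obtain ⟨b, hb, hbv⟩ := Finset.mem_image.mp hv
    exact hbv ▸ hmap b (Finset.mem_inter.mp hb).2
  -- nb A \ VP contains two disjoint pieces
  have hVPsub : VP ⊆ nb E Pk := by
    rw [hVP, hPk, nb_union]
    exact fun v hv => Finset.mem_union_right _ (Finset.mem_sdiff.mp hv).1
  have hpiece : (nb E A \ nb E Pk) ∪ (nb E A ∩ nb E P) ⊆ nb E A \ VP := by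
    intro v hv
    rw [Finset.mem_sdiff, hVP]
    rcases Finset.mem_union.mp hv with h | h
    · rw [Finset.mem_sdiff] at h
      exact ⟨h.1, fun hc => h.2 (hVPsub hc)⟩
    · rw [Finset.mem_inter] at h
      exact ⟨h.1, fun hc => (Finset.mem_sdiff.mp hc).2 h.2⟩
  have hpdisj : Disjoint (nb E A \ nb E Pk) (nb E A ∩ nb E P) := by
    rw [Finset.disjoint_left]
    intro v hv1 hv2
    exact (Finset.mem_sdiff.mp hv1).2
      (by rw [hPk, nb_union]; exact Finset.mem_union_left _ (Finset.mem_inter.mp hv2).2)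
  -- first piece
  have h1 : (A \ Pk).card ≤ (nb E A \ nb E Pk).card := by
    have hu : (A ∪ Pk).card ≤ (nb E (A ∪ Pk)).card := hall _
    rw [nb_union] at hu
    have e0 : (nb E A ∪ nb E Pk) \ nb E Pk = nb E A \ nb E Pk := by
      ext v; simp only [Finset.mem_sdiff, Finset.mem_union]; tauto
    have e1 := Finset.card_sdiff_add_card_eq_card
      (Finset.subset_union_right (s₁ := nb E A) (s₂ := nb E Pk))
    rw [e0] at e1
    have e0' : (A ∪ Pk) \ Pk = A \ Pk := by
      ext g; simp only [Finset.mem_sdiff, Finset.mem_union]; tauto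
    have e2 := Finset.card_sdiff_add_card_eq_card
      (Finset.subset_union_right (s₁ := A) (s₂ := Pk))
    rw [e0'] at e2
    have := hPkg
    unfold good at this
    omega
  -- second piece
  have h2 : (A ∩ P).card ≤ (nb E A ∩ nb E P).card := by
    calc (A ∩ P).card ≤ (nb E (A ∩ P)).card := hall _
    _ ≤ (nb E A ∩ nb E P).card := Finset.card_le_card
        (Finset.subset_inter (nb_mono Finset.inter_subset_left)
          (nb_mono Finset.inter_subset_right))
  -- |A \ Pk| + |A ∩ P| = |A|
  have hAsplit : (A \ Pk).card + (A ∩ P).card = A.card := by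
    have : A ∩ Pk = A ∩ P := by
      rw [hPk]
      ext g
      simp only [Finset.mem_inter, Finset.mem_union, hA, Finset.mem_sdiff]
      tauto
    rw [← this]
    have := Finset.card_sdiff_add_card_inter A Pk
    omega
  -- assemble
  have hsub2 : (nb E A \ VP) ∪ B.image σ ⊆ nb E A ∪ B.image σ := by
    apply Finset.union_subset_union_left
    exact Finset.sdiff_subset
  have hdisj2 : Disjoint (nb E A \ VP) (B.image σ) := by
    rw [Finset.disjoint_left]
    intro v hv1 hv2
    exact (Finset.mem_sdiff.mp hv1).2 (hBVP hv2)
  have hScard : S'.card = A.card + B.card := by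
    have := Finset.card_sdiff_add_card_inter S' SF
    rw [← hA, ← hB] at this
    omega
  calc S'.card = A.card + B.card := hScard
  _ ≤ ((nb E A \ nb E Pk).card + (nb E A ∩ nb E P).card) + (B.image σ).card := by omega
  _ = ((nb E A \ nb E Pk) ∪ (nb E A ∩ nb E P)).card + (B.image σ).card := by
      rw [Finset.card_union_of_disjoint hpdisj]
  _ ≤ (nb E A \ VP).card + (B.image σ).card := by
      have := Finset.card_le_card hpiece; omega
  _ = ((nb E A \ VP) ∪ B.image σ).card := (Finset.card_union_of_disjoint hdisj2).symm
  _ ≤ (nb E A ∪ B.image σ).card := Finset.card_le_card hsub2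

lemma nb_univ_eq (hG : SCGraph E Finset.univ Finset.univ) :
    nb E (Finset.univ : Finset F) = (Finset.univ : Finset V) := by
  apply Finset.eq_univ_of_card
  have h1 : (Finset.univ : Finset F).card = (nb E Finset.univ).card := hG.2.1
  have h2 := hG.1
  rw [Finset.card_univ, Finset.card_univ] at h2
  rw [Finset.card_univ] at h1
  omega

lemma SCGraph_do (hG : SCGraph E Finset.univ Finset.univ) (hS : IsCOD E S)
    (hinj : Set.InjOn σ ((S k : Finset F) : Set F))
    (hmap : ∀ f ∈ S k, σ f ∈ nb E (S k) \ nb E (cp S (k : ℕ)))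
    (himg : (S k).image σ = nb E (S k) \ nb E (cp S (k : ℕ))) :
    SCGraph (doEdges E (S k) σ) Finset.univ Finset.univ := by
  have hall := hall_of_SCGraph hG
  set SF := S k with hSF
  set P := cp S (k : ℕ) with hP
  have hnbuniv : nb (doEdges E SF σ) (Finset.univ : Finset F) = Finset.univ := by
    apply Finset.eq_univ_of_forall
    intro v
    have hv : v ∈ nb E (Finset.univ : Finset F) := (nb_univ_eq hG).symm ▸ Finset.mem_univ v
    rw [nb_do]
    have hdecomp : (Finset.univ : Finset F) = (Finset.univ \ SF) ∪ SF := by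
      ext g; simp
    rw [hdecomp, nb_union] at hv
    have hPsub : P ⊆ Finset.univ \ SF := by
      intro g hg
      rw [Finset.mem_sdiff]
      exact ⟨Finset.mem_univ g,
        fun hc => Finset.disjoint_left.mp (disj_S_cp hall hS k) hc hg⟩
    rcases Finset.mem_union.mp hv with h | h
    · exact Finset.mem_union_left _ h
    · by_cases hvP : v ∈ nb E P
      · exact Finset.mem_union_left _ (nb_mono hPsub hvP)
      · apply Finset.mem_union_right
        rw [Finset.univ_inter, himg]
        exact Finset.mem_sdiff.mpr ⟨h, hvP⟩
  refine ⟨hG.1, ?_, ?_⟩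
  · show (Finset.univ : Finset F).card = (nb (doEdges E SF σ) Finset.univ).card
    rw [hnbuniv]
    exact hG.1
  · intro S' _
    exact hall_do hG hS hinj hmap S'

end DoGraph
end CO

namespace CO
open Finset

section T0sec
variable {E : Finset (F × V)} {n : ℕ} {S : Fin n → Finset F} {k : Fin n} {σ : F → V}

lemma Sj_subset_cp {n : ℕ} {S : Fin n → Finset F} {j : Fin n} {a : ℕ} (h : (j:ℕ) < a) :
    S j ⊆ cp S a := by
  have h1 : S j ⊆ cp S ((j:ℕ)+1) := by
    rw [cp_succ S j.isLt, Fin.eta]; exact Finset.subset_union_right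
  exact h1.trans (cp_mono (by omega))

/-- the explicit causal-ordering decomposition of the intervened graph -/
def T0 (S : Fin n → Finset F) (k : Fin n) (L : List F) :
    Fin (n - 1 + L.length) → Finset F := fun j =>
  if h : (j : ℕ) < (k : ℕ) then S ⟨j, by have := k.isLt; omega⟩
  else if h2 : (j : ℕ) - (k : ℕ) < L.length then {L.get ⟨(j : ℕ) - (k : ℕ), h2⟩}
  else S ⟨(j : ℕ) - L.length + 1, by have := j.isLt; have := k.isLt; omega⟩

variable {L : List F}

lemma T0_eq1 {j : Fin (n - 1 + L.length)} (h : (j : ℕ) < (k : ℕ)) :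
    T0 S k L j = S ⟨j, by have := k.isLt; omega⟩ := by
  unfold T0; rw [dif_pos h]

lemma T0_eq2 {j : Fin (n - 1 + L.length)} (h : ¬ (j : ℕ) < (k : ℕ))
    (h2 : (j : ℕ) - (k : ℕ) < L.length) :
    T0 S k L j = {L.get ⟨(j : ℕ) - (k : ℕ), h2⟩} := by
  unfold T0; rw [dif_neg h, dif_pos h2]

lemma T0_eq3 {j : Fin (n - 1 + L.length)} (h : ¬ (j : ℕ) < (k : ℕ))
    (h2 : ¬ (j : ℕ) - (k : ℕ) < L.length) :
    T0 S k L j = S ⟨(j : ℕ) - L.length + 1, by have := j.isLt; have := k.isLt; omega⟩ := by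
  unfold T0; rw [dif_neg h, dif_neg h2]

lemma take_toFinset_succ {b : ℕ} (hb : b < L.length) :
    (L.take (b + 1)).toFinset = (L.take b).toFinset ∪ {L.get ⟨b, hb⟩} := by
  rw [List.take_succ, List.toFinset_append]
  congr 1
  rw [List.getElem?_eq_getElem hb]
  simp [List.get_eq_getElem]

/-- the prefix unions of `T0` -/
lemma cp_T0 (hlen : 0 < L.length) (hL : L.toFinset = S k) :
    ∀ a : ℕ, a ≤ n - 1 + L.length →
    cp (T0 S k L) a =
      if a ≤ (k : ℕ) then cp S a
      else if a ≤ (k : ℕ) + L.length then cp S (k : ℕ) ∪ (L.take (a - (k : ℕ))).toFinset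
      else cp S (a - L.length + 1) := by
  intro a
  induction a with
  | zero =>
    intro _
    rw [if_pos (Nat.zero_le _), cp_zero, cp_zero]
  | succ a ih =>
    intro ha
    have ham : a < n - 1 + L.length := by omega
    have ihv := ih (le_of_lt ham)
    rw [cp_succ _ ham]
    by_cases hc1 : a + 1 ≤ (k : ℕ)
    · -- still below k
      rw [if_pos hc1]
      rw [if_pos (by omega)] at ihv
      rw [ihv, T0_eq1 (j := ⟨a, ham⟩) (show a < (k : ℕ) by omega)]
      rw [cp_succ S (by have := k.isLt; omega : a < n)]
    · by_cases hc2 : a + 1 ≤ (k : ℕ) + L.length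
      · -- the singleton regime
        rw [if_neg hc1, if_pos hc2]
        have hak : (k : ℕ) ≤ a := by omega
        have hblt : a - (k : ℕ) < L.length := by omega
        have hT : T0 S k L ⟨a, ham⟩ = {L.get ⟨a - (k : ℕ), hblt⟩} :=
          T0_eq2 (show ¬ a < (k : ℕ) by omega) hblt
        have htake : (L.take (a + 1 - (k : ℕ))).toFinset
            = (L.take (a - (k : ℕ))).toFinset ∪ {L.get ⟨a - (k : ℕ), hblt⟩} := by
          have h5 : a + 1 - (k : ℕ) = (a - (k : ℕ)) + 1 := by omega
          rw [h5, take_toFinset_succ hblt]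
        rw [hT, htake]
        by_cases hak' : a ≤ (k : ℕ)
        · -- a = k exactly
          have haeq : a = (k : ℕ) := by omega
          rw [if_pos hak'] at ihv
          have hcpa : cp S a = cp S (k : ℕ) := by rw [haeq]
          have h0 : (L.take (a - (k : ℕ))).toFinset = ∅ := by
            have h6 : a - (k : ℕ) = 0 := by omega
            rw [h6]; simp
          rw [ihv, hcpa, h0]
          simp
        · rw [if_neg hak', if_pos (by omega)] at ihv
          rw [ihv, Finset.union_assoc]
      · -- past the singleton regime
        rw [if_neg hc1, if_neg hc2]
        have hkn : (k : ℕ) < n := k.isLt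
        obtain ⟨b, hb⟩ : ∃ b, a = b + L.length := ⟨a - L.length, by omega⟩
        subst hb
        have hbk : (k : ℕ) ≤ b := by omega
        have hidx : b + 1 < n := by omega
        have harith : b + L.length + 1 - L.length + 1 = b + 2 := by omega
        have hT : T0 S k L ⟨b + L.length, ham⟩ = S ⟨b + 1, hidx⟩ := by
          rw [T0_eq3 (j := ⟨b + L.length, ham⟩) (show ¬ b + L.length < (k : ℕ) by omega)
            (show ¬ b + L.length - (k : ℕ) < L.length by omega)]
          congr 1
          exact Fin.ext (show b + L.length - L.length + 1 = b + 1 by omega)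
        rw [hT, harith, cp_succ S (show b + 1 < n from hidx)]
        congr 1
        by_cases hc3 : b ≤ (k : ℕ)
        · have hbk' : b = (k : ℕ) := by omega
          subst hbk'
          rw [if_neg (by omega), if_pos (by omega)] at ihv
          rw [ihv]
          have h1 : (k : ℕ) + L.length - (k : ℕ) = L.length := by omega
          rw [h1, List.take_length, hL, cp_succ S k.isLt, Fin.eta]
        · rw [if_neg (by omega), if_neg (by omega)] at ihv
          rw [ihv]
          congr 1
          omega

end T0sec
end CO

set_option linter.unusedSectionVars false
set_option maxHeartbeats 1000000


namespace CO
open Finset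

lemma get_not_mem_take {l : List F} (hnd : l.Nodup) {b : ℕ} (hb : b < l.length) :
    l.get ⟨b, hb⟩ ∉ (l.take b).toFinset := by
  intro hmem
  rw [List.mem_toFinset] at hmem
  obtain ⟨i, hi, hEq⟩ := List.mem_take_iff_getElem.mp hmem
  have : i = b := by
    have := (List.Nodup.getElem_inj_iff hnd).mp hEq
    exact this
  omega

section Final
variable {E : Finset (F × V)} {n : ℕ} {S : Fin n → Finset F} {k : Fin n} {σ : F → V} {L : List F}

lemma nb_do_high (hG : SCGraph E Finset.univ Finset.univ) (hS : IsCOD E S)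
    (himg : (S k).image σ = nb E (S k) \ nb E (cp S (k : ℕ)))
    {i : ℕ} (hik : (k : ℕ) < i) :
    nb (doEdges E (S k) σ) (cp S i) = nb E (cp S i) := by
  have hall := hall_of_SCGraph hG
  have hsub : S k ⊆ cp S i := Sj_subset_cp hik
  have hdisj : Disjoint (cp S (k : ℕ)) (S k) := (disj_S_cp hall hS k).symm
  have hcpk_sub : cp S (k : ℕ) ⊆ cp S i \ S k :=
    Finset.subset_sdiff.mpr ⟨cp_mono (by omega), hdisj⟩
  have h2 : cp S i ∩ S k = S k := Finset.inter_eq_right.mpr hsub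
  rw [nb_do, h2, himg]
  apply Finset.Subset.antisymm
  · apply Finset.union_subset
    · exact nb_mono Finset.sdiff_subset
    · exact (Finset.sdiff_subset).trans (nb_mono hsub)
  · intro v hv
    have hdecomp : cp S i = (cp S i \ S k) ∪ S k := by
      rw [Finset.sdiff_union_of_subset hsub]
    rw [hdecomp, nb_union] at hv
    rcases Finset.mem_union.mp hv with h | h
    · exact Finset.mem_union_left _ h
    · by_cases hvk : v ∈ nb E (cp S (k : ℕ))
      · exact Finset.mem_union_left _ (nb_mono hcpk_sub hvk)
      · exact Finset.mem_union_right _ (Finset.mem_sdiff.mpr ⟨h, hvk⟩)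

lemma hprevA (hlen : 0 < L.length) (hL : L.toFinset = S k)
    {j : Fin (n - 1 + L.length)} (h : (j : ℕ) ≤ (k : ℕ)) :
    codPrev (T0 S k L) j = cp S (j : ℕ) := by
  rw [codPrev_eq_cp, cp_T0 hlen hL _ (le_of_lt j.isLt), if_pos h]

lemma hprevB (hlen : 0 < L.length) (hL : L.toFinset = S k)
    {j : Fin (n - 1 + L.length)} (h1 : (k : ℕ) ≤ (j : ℕ)) (h2 : (j : ℕ) ≤ (k : ℕ) + L.length) :
    codPrev (T0 S k L) j = cp S (k : ℕ) ∪ (L.take ((j : ℕ) - (k : ℕ))).toFinset := by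
  rw [codPrev_eq_cp, cp_T0 hlen hL _ (le_of_lt j.isLt)]
  by_cases hjk : (j : ℕ) ≤ (k : ℕ)
  · rw [if_pos hjk]
    have he : (j : ℕ) = (k : ℕ) := by omega
    have h0 : (j : ℕ) - (k : ℕ) = 0 := by omega
    rw [h0, he]
    simp
  · rw [if_neg hjk, if_pos h2]

lemma hprevC (hlen : 0 < L.length)
    (hL : L.toFinset = S k)
    {j : Fin (n - 1 + L.length)} (h : (k : ℕ) + L.length ≤ (j : ℕ)) :
    codPrev (T0 S k L) j = cp S ((j : ℕ) - L.length + 1) := by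
  rw [codPrev_eq_cp, cp_T0 hlen hL _ (le_of_lt j.isLt)]
  rw [if_neg (by omega)]
  by_cases hc : (j : ℕ) ≤ (k : ℕ) + L.length
  · rw [if_pos hc]
    have he : (j : ℕ) = (k : ℕ) + L.length := by omega
    have h1 : (j : ℕ) - (k : ℕ) = L.length := by omega
    have h2 : (j : ℕ) - L.length + 1 = (k : ℕ) + 1 := by omega
    rw [h1, h2, List.take_length, hL, cp_succ S k.isLt, Fin.eta]
  · rw [if_neg hc]

variable (hG : SCGraph E Finset.univ Finset.univ) (hS : IsCOD E S)
  (hinj : Set.InjOn σ ((S k : Finset F) : Set F))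
  (hmap : ∀ f ∈ S k, σ f ∈ nb E (S k) \ nb E (cp S (k : ℕ)))
  (himg : (S k).image σ = nb E (S k) \ nb E (cp S (k : ℕ)))
  (hlen : 0 < L.length) (hL : L.toFinset = S k) (hnd : L.Nodup)

include hG hS hlen hL

lemma caseA {j : Fin (n - 1 + L.length)} {i : Fin n}
    (hji : (j : ℕ) = (i : ℕ)) (hik : (i : ℕ) < (k : ℕ)) :
    MinSCSet (doEdges E (S k) σ) (Finset.univ \ codPrev (T0 S k L) j)
      (Finset.univ \ subAdj (doEdges E (S k) σ) Finset.univ (codPrev (T0 S k L) j))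
      (T0 S k L j)
    ∧ codCluster (doEdges E (S k) σ) (T0 S k L) j = codCluster E S i := by
  have hall := hall_of_SCGraph hG
  have hdk := disj_S_cp hall hS k
  have hprev : codPrev (T0 S k L) j = cp S (j : ℕ) := hprevA hlen hL (by omega)
  have hTj : T0 S k L j = S i := by
    rw [T0_eq1 (show (j : ℕ) < (k : ℕ) by omega)]
    exact congrArg S (Fin.ext (show (j : ℕ) = (i : ℕ) from hji))
  have hdisj_prev : Disjoint (cp S (j : ℕ)) (S k) :=
    Finset.disjoint_of_subset_left (cp_mono (show (j : ℕ) ≤ (k : ℕ) by omega)) hdk.symm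
  have hdisj_S : Disjoint (S i) (S k) :=
    Finset.disjoint_of_subset_left (Sj_subset_cp hik) hdk.symm
  have hnbprev : nb (doEdges E (S k) σ) (cp S (j : ℕ)) = nb E (cp S (j : ℕ)) :=
    nb_do_of_disjoint σ hdisj_prev
  constructor
  · rw [hprev, hTj]
    rw [show subAdj (doEdges E (S k) σ) Finset.univ (cp S (j : ℕ))
      = nb (doEdges E (S k) σ) (cp S (j : ℕ)) from rfl, hnbprev]
    rw [MinSCSet_do_of_disjoint σ hdisj_S]
    have h2 := hS.2 i
    rw [codPrev_eq_cp] at h2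
    rw [hji]
    exact h2
  · unfold codCluster
    rw [hTj, hprev]
    rw [show subAdj (doEdges E (S k) σ) Finset.univ (S i)
      = nb (doEdges E (S k) σ) (S i) from rfl, nb_do_of_disjoint σ hdisj_S]
    rw [show subAdj (doEdges E (S k) σ) Finset.univ (cp S (j : ℕ))
      = nb (doEdges E (S k) σ) (cp S (j : ℕ)) from rfl, hnbprev]
    rw [hji, codPrev_eq_cp]
    rfl

include hinj hmap hnd in
lemma caseB {j : Fin (n - 1 + L.length)} {t : Fin L.length}
    (hjt : (j : ℕ) = (k : ℕ) + (t : ℕ)) :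
    MinSCSet (doEdges E (S k) σ) (Finset.univ \ codPrev (T0 S k L) j)
      (Finset.univ \ subAdj (doEdges E (S k) σ) Finset.univ (codPrev (T0 S k L) j))
      (T0 S k L j)
    ∧ codCluster (doEdges E (S k) σ) (T0 S k L) j = ({L.get t}, {σ (L.get t)}) := by
  have hall := hall_of_SCGraph hG
  have hdk := disj_S_cp hall hS k
  set f := L.get t with hf
  have hfSk : f ∈ S k := by
    rw [← hL]; exact List.mem_toFinset.mpr (List.get_mem L t)
  have hsub : (j : ℕ) - (k : ℕ) = (t : ℕ) := by omega
  have hprev : codPrev (T0 S k L) j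
      = cp S (k : ℕ) ∪ (L.take (t : ℕ)).toFinset := by
    rw [hprevB hlen hL (by omega) (by have := t.isLt; omega), hsub]
  set Bt := (L.take (t : ℕ)).toFinset with hBt
  have hBtSk : Bt ⊆ S k := by
    intro x hx
    rw [← hL]
    exact List.mem_toFinset.mpr (List.take_subset _ _ (List.mem_toFinset.mp hx))
  have h2' : (j : ℕ) - (k : ℕ) < L.length := by have := t.isLt; omega
  have hfin : (⟨(j : ℕ) - (k : ℕ), h2'⟩ : Fin L.length) = t := Fin.ext hsub
  have hTj : T0 S k L j = {f} := by
    rw [T0_eq2 (show ¬ (j : ℕ) < (k : ℕ) by omega) h2', hfin]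
  have hnbprev : nb (doEdges E (S k) σ) (cp S (k : ℕ) ∪ Bt)
      = nb E (cp S (k : ℕ)) ∪ Bt.image σ := by
    have e1 : (cp S (k : ℕ) ∪ Bt) \ S k = cp S (k : ℕ) := by
      ext g
      simp only [Finset.mem_sdiff, Finset.mem_union]
      constructor
      · rintro ⟨h | h, hnk⟩
        · exact h
        · exact absurd (hBtSk h) hnk
      · intro hg
        exact ⟨Or.inl hg, fun hc => Finset.disjoint_left.mp hdk hc hg⟩
    have e2 : (cp S (k : ℕ) ∪ Bt) ∩ S k = Bt := by
      ext g
      simp only [Finset.mem_inter, Finset.mem_union]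
      constructor
      · rintro ⟨h | h, hk'⟩
        · exact absurd hk' (Finset.disjoint_left.mp hdk.symm h)
        · exact h
      · intro hg
        exact ⟨Or.inr hg, hBtSk hg⟩
    rw [nb_do, e1, e2]
  have hσfV : σ f ∈ nb E (S k) \ nb E (cp S (k : ℕ)) := hmap f hfSk
  have hfBt : f ∉ Bt := by
    have h := get_not_mem_take hnd t.isLt
    rwa [show (⟨(t : ℕ), t.isLt⟩ : Fin L.length) = t from Fin.ext rfl] at h
  have hσfBt : σ f ∉ Bt.image σ := by
    intro hc
    obtain ⟨b, hbBt, hbe⟩ := Finset.mem_image.mp hc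
    have hbf : b = f := hinj (Finset.mem_coe.mpr (hBtSk hbBt)) (Finset.mem_coe.mpr hfSk) hbe
    exact hfBt (hbf ▸ hbBt)
  have hσfprev : σ f ∉ nb E (cp S (k : ℕ)) ∪ Bt.image σ := by
    rw [Finset.mem_union]
    push_neg
    exact ⟨(Finset.mem_sdiff.mp hσfV).2, hσfBt⟩
  have hnbf : nb (doEdges E (S k) σ) {f} = {σ f} := by
    have e1 : {f} \ S k = ∅ :=
      Finset.sdiff_eq_empty_iff_subset.mpr (Finset.singleton_subset_iff.mpr hfSk)
    have e2 : ({f} : Finset F) ∩ S k = {f} :=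
      Finset.inter_eq_left.mpr (Finset.singleton_subset_iff.mpr hfSk)
    rw [nb_do, e1, e2, nb_empty, Finset.image_singleton, Finset.empty_union]
  have hadj : subAdj (doEdges E (S k) σ)
      (Finset.univ \ (nb E (cp S (k : ℕ)) ∪ Bt.image σ)) {f} = {σ f} := by
    rw [subAdj_eq, hnbf]
    apply Finset.inter_eq_left.mpr
    rw [Finset.singleton_subset_iff, Finset.mem_sdiff]
    exact ⟨Finset.mem_univ _, hσfprev⟩
  constructor
  · rw [hprev, hTj]
    rw [show subAdj (doEdges E (S k) σ) Finset.univ (cp S (k : ℕ) ∪ Bt)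
      = nb (doEdges E (S k) σ) (cp S (k : ℕ) ∪ Bt) from rfl, hnbprev]
    refine ⟨?_, Finset.singleton_nonempty f, ⟨?_, ?_⟩, ?_⟩
    · rw [Finset.singleton_subset_iff, Finset.mem_sdiff]
      refine ⟨Finset.mem_univ f, ?_⟩
      rw [Finset.mem_union]
      push_neg
      exact ⟨Finset.disjoint_left.mp hdk hfSk, hfBt⟩
    · rw [hadj]; simp
    · intro S'' hS''
      rcases Finset.subset_singleton_iff.mp hS'' with rfl | rfl
      · simp
      · rw [hadj]; simp
    · intro S' hS' hne _
      rw [Finset.eq_empty_of_ssubset_singleton hS'] at hne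
      exact absurd hne (by simp)
  · unfold codCluster
    rw [hTj, hprev]
    rw [show subAdj (doEdges E (S k) σ) Finset.univ ({f} : Finset F)
      = nb (doEdges E (S k) σ) {f} from rfl, hnbf]
    rw [show subAdj (doEdges E (S k) σ) Finset.univ (cp S (k : ℕ) ∪ Bt)
      = nb (doEdges E (S k) σ) (cp S (k : ℕ) ∪ Bt) from rfl, hnbprev]
    rw [Finset.sdiff_eq_self_of_disjoint (Finset.disjoint_singleton_left.mpr hσfprev)]

include himg in
lemma caseC {j : Fin (n - 1 + L.length)} {i : Fin n}
    (hji : (j : ℕ) = (i : ℕ) - 1 + L.length) (hki : (k : ℕ) < (i : ℕ)) :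
    MinSCSet (doEdges E (S k) σ) (Finset.univ \ codPrev (T0 S k L) j)
      (Finset.univ \ subAdj (doEdges E (S k) σ) Finset.univ (codPrev (T0 S k L) j))
      (T0 S k L j)
    ∧ codCluster (doEdges E (S k) σ) (T0 S k L) j = codCluster E S i := by
  have hall := hall_of_SCGraph hG
  have hi1 : 1 ≤ (i : ℕ) := by omega
  have hj' : (j : ℕ) - L.length + 1 = (i : ℕ) := by omega
  have hprev : codPrev (T0 S k L) j = cp S (i : ℕ) := by
    rw [hprevC hlen hL (show (k : ℕ) + L.length ≤ (j : ℕ) by omega), hj']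
  have hTj : T0 S k L j = S i := by
    rw [T0_eq3 (show ¬ (j : ℕ) < (k : ℕ) by omega)
      (show ¬ ((j : ℕ) - (k : ℕ) < L.length) by omega)]
    exact congrArg S (Fin.ext (show (j : ℕ) - L.length + 1 = (i : ℕ) from hj'))
  have hSkcp : S k ⊆ cp S (i : ℕ) := Sj_subset_cp hki
  have hdisj_S : Disjoint (S i) (S k) :=
    Finset.disjoint_of_subset_right hSkcp (disj_S_cp hall hS i)
  have hnbprev : nb (doEdges E (S k) σ) (cp S (i : ℕ)) = nb E (cp S (i : ℕ)) :=
    nb_do_high hG hS himg hki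
  constructor
  · rw [hprev, hTj]
    rw [show subAdj (doEdges E (S k) σ) Finset.univ (cp S (i : ℕ))
      = nb (doEdges E (S k) σ) (cp S (i : ℕ)) from rfl, hnbprev]
    rw [MinSCSet_do_of_disjoint σ hdisj_S]
    have h2 := hS.2 i
    rw [codPrev_eq_cp] at h2
    exact h2
  · unfold codCluster
    rw [hTj, hprev]
    rw [show subAdj (doEdges E (S k) σ) Finset.univ (S i)
      = nb (doEdges E (S k) σ) (S i) from rfl, nb_do_of_disjoint σ hdisj_S]
    rw [show subAdj (doEdges E (S k) σ) Finset.univ (cp S (i : ℕ))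
      = nb (doEdges E (S k) σ) (cp S (i : ℕ)) from rfl, hnbprev]
    rw [codPrev_eq_cp]
    rfl

end Final
end CO

set_option linter.unusedSectionVars false
set_option maxHeartbeats 1000000


namespace CO
open Finset

section Final2
variable {E : Finset (F × V)} {n : ℕ} {S : Fin n → Finset F} {k : Fin n} {σ : F → V} {L : List F}

variable (hG : SCGraph E Finset.univ Finset.univ) (hS : IsCOD E S)
  (hinj : Set.InjOn σ ((S k : Finset F) : Set F))
  (hmap : ∀ f ∈ S k, σ f ∈ nb E (S k) \ nb E (cp S (k : ℕ)))
  (himg : (S k).image σ = nb E (S k) \ nb E (cp S (k : ℕ)))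
  (hlen : 0 < L.length) (hL : L.toFinset = S k) (hnd : L.Nodup)

include hG hS hinj hmap himg hlen hL hnd

lemma T0_isCOD : IsCOD (doEdges E (S k) σ) (T0 S k L) := by
  constructor
  · -- the union is everything
    have h1 : Finset.univ.biUnion (T0 S k L) = cp (T0 S k L) (n - 1 + L.length) :=
      (cp_of_ge _ le_rfl).symm
    have hkn : (k : ℕ) < n := k.isLt
    have h2 : cp (T0 S k L) (n - 1 + L.length) = cp S n := by
      rw [cp_T0 hlen hL _ le_rfl]
      by_cases hc : n - 1 + L.length ≤ (k : ℕ) + L.length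
      · rw [if_neg (by omega), if_pos hc]
        have he : n - 1 = (k : ℕ) := by omega
        have h3 : n - 1 + L.length - (k : ℕ) = L.length := by omega
        rw [h3, List.take_length, hL]
        have h5 : cp S ((k : ℕ) + 1) = cp S (k : ℕ) ∪ S k := by
          rw [cp_succ S hkn, Fin.eta]
        rw [← h5, cp_of_ge S (by omega), cp_of_ge S le_rfl]
      · rw [if_neg (by omega), if_neg hc]
        congr 1
        omega
    rw [h1, h2, cp_of_ge S le_rfl, hS.1]
  · intro j
    have hkn : (k : ℕ) < n := k.isLt
    by_cases h1 : (j : ℕ) < (k : ℕ)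
    · exact (caseA hG hS hlen hL (i := ⟨(j : ℕ), by omega⟩) rfl h1).1
    · by_cases h2 : (j : ℕ) - (k : ℕ) < L.length
      · exact (caseB hG hS hinj hmap hlen hL hnd
          (t := ⟨(j : ℕ) - (k : ℕ), h2⟩) (by simp; omega)).1
      · have hjlt := j.isLt
        exact (caseC hG hS himg hlen hL
          (i := ⟨(j : ℕ) - L.length + 1, by omega⟩) (by simp; omega) (by simp; omega)).1

lemma T0_cluster_mem (j : Fin (n - 1 + L.length)) :
    (∃ i : Fin n, i ≠ k ∧ codCluster (doEdges E (S k) σ) (T0 S k L) j = codCluster E S i) ∨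
    (∃ f ∈ S k, codCluster (doEdges E (S k) σ) (T0 S k L) j = ({f}, {σ f})) := by
  have hkn : (k : ℕ) < n := k.isLt
  by_cases h1 : (j : ℕ) < (k : ℕ)
  · refine Or.inl ⟨⟨(j : ℕ), by omega⟩, ?_, (caseA hG hS hlen hL rfl h1).2⟩
    intro hc
    have : (j : ℕ) = (k : ℕ) := congrArg Fin.val hc
    omega
  · by_cases h2 : (j : ℕ) - (k : ℕ) < L.length
    · set t : Fin L.length := ⟨(j : ℕ) - (k : ℕ), h2⟩
      refine Or.inr ⟨L.get t, ?_, (caseB hG hS hinj hmap hlen hL hnd (by simp [t]; omega)).2⟩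
      rw [← hL]
      exact List.mem_toFinset.mpr (List.get_mem L t)
    · have hjlt := j.isLt
      refine Or.inl ⟨⟨(j : ℕ) - L.length + 1, by omega⟩, ?_,
        (caseC hG hS himg hlen hL (by simp; omega) (by simp; omega)).2⟩
      intro hc
      have : (j : ℕ) - L.length + 1 = (k : ℕ) := congrArg Fin.val hc
      omega

lemma T0_cluster_surj1 (i : Fin n) (hik : i ≠ k) :
    ∃ j : Fin (n - 1 + L.length),
      codCluster (doEdges E (S k) σ) (T0 S k L) j = codCluster E S i := by
  have hkn : (k : ℕ) < n := k.isLt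
  have hin : (i : ℕ) < n := i.isLt
  have hne : (i : ℕ) ≠ (k : ℕ) := fun hc => hik (Fin.ext hc)
  rcases Nat.lt_or_ge (i : ℕ) (k : ℕ) with h | h
  · exact ⟨⟨(i : ℕ), by omega⟩, (caseA hG hS hlen hL rfl h).2⟩
  · have hki : (k : ℕ) < (i : ℕ) := by omega
    refine ⟨⟨(i : ℕ) - 1 + L.length, by omega⟩,
      (caseC hG hS himg hlen hL (by simp) (by simp; omega)).2⟩

lemma T0_cluster_surj2 (f : F) (hf : f ∈ S k) :
    ∃ j : Fin (n - 1 + L.length),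
      codCluster (doEdges E (S k) σ) (T0 S k L) j = ({f}, {σ f}) := by
  have hkn : (k : ℕ) < n := k.isLt
  have hfL : f ∈ L := by rw [← List.mem_toFinset, hL]; exact hf
  obtain ⟨t, ht⟩ := List.mem_iff_get.mp hfL
  refine ⟨⟨(k : ℕ) + (t : ℕ), by have := t.isLt; omega⟩, ?_⟩
  rw [← ht]
  exact (caseB hG hS hinj hmap hlen hL hnd (t := t) (by simp)).2

end Final2
end CO


open CO in
/-- performing a perfect intervention on a cluster commutes with
causal ordering.  Let `(S 0, …, S (n-1))` be a causal-ordering decomposition of a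
finite self-contained bipartite graph `G` with clusters `C^(i) = codCluster E S i`,
fix `k`, set `S_F = S k` and `S_V = C^(k) ∩ V`, and let `σ : S_F → S_V` be a
bijection.  Then the intervened graph `G_do(S_F, σ)` is self-contained, and the
family of clusters of every causal-ordering decomposition of `G_do(S_F, σ)` equals
`{C^(i) : i ≠ k} ∪ {{f, σ f} : f ∈ S_F}`. -/
theorem intervention_commutes_with_causal_ordering (E : Finset (F × V))
    (hG : SCGraph E Finset.univ Finset.univ)
    {n : ℕ} (S : Fin n → Finset F) (hS : IsCOD E S) (k : Fin n) (σ : F → V)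
    (hσ : Set.BijOn σ ((S k : Finset F) : Set F)
      (((codCluster E S k).2 : Finset V) : Set V)) :
    SCGraph (doEdges E (S k) σ) Finset.univ Finset.univ ∧
    ∀ {m : ℕ} (T : Fin m → Finset F), IsCOD (doEdges E (S k) σ) T →
      Set.range (codCluster (doEdges E (S k) σ) T) =
        {p : Finset F × Finset V | ∃ i : Fin n, i ≠ k ∧ p = codCluster E S i} ∪
          {p : Finset F × Finset V | ∃ f ∈ S k, p = ({f}, {σ f})} := by
  classical
  have hc2 : (codCluster E S k).2 = nb E (S k) \ nb E (cp S (k : ℕ)) := by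
    unfold codCluster
    rw [codPrev_eq_cp]
    rfl
  have hinj : Set.InjOn σ ((S k : Finset F) : Set F) := hσ.injOn
  have hmap : ∀ f ∈ S k, σ f ∈ nb E (S k) \ nb E (cp S (k : ℕ)) := by
    intro f hf
    have := hσ.mapsTo (Finset.mem_coe.mpr hf)
    rw [hc2] at this
    exact_mod_cast this
  have himg : (S k).image σ = nb E (S k) \ nb E (cp S (k : ℕ)) := by
    apply Finset.coe_injective
    rw [Finset.coe_image, hσ.image_eq, hc2]
  set L := (S k).toList with hLdef
  have hL : L.toFinset = S k := Finset.toList_toFinset (S k)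
  have hnd : L.Nodup := Finset.nodup_toList (S k)
  have hlen : 0 < L.length := by
    rw [hLdef, Finset.length_toList]
    exact Finset.card_pos.mpr (hS.2 k).2.1
  have hGdo : SCGraph (doEdges E (S k) σ) Finset.univ Finset.univ :=
    SCGraph_do hG hS hinj hmap himg
  have hT0cod : IsCOD (doEdges E (S k) σ) (T0 S k L) :=
    T0_isCOD hG hS hinj hmap himg hlen hL hnd
  refine ⟨hGdo, ?_⟩
  intro m T hT
  ext p
  simp only [Set.mem_range, Set.mem_union, Set.mem_setOf_eq]
  constructor
  · rintro ⟨j', rfl⟩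
    obtain ⟨j, hj⟩ := cluster_unique hGdo hT hT0cod j'
    rcases T0_cluster_mem hG hS hinj hmap himg hlen hL hnd j with ⟨i, hik, hcl⟩ | ⟨f, hf, hcl⟩
    · exact Or.inl ⟨i, hik, by rw [hj, hcl]⟩
    · exact Or.inr ⟨f, hf, by rw [hj, hcl]⟩
  · rintro (⟨i, hik, rfl⟩ | ⟨f, hf, rfl⟩)
    · obtain ⟨j, hj⟩ := T0_cluster_surj1 hG hS hinj hmap himg hlen hL hnd i hik
      obtain ⟨j', hj'⟩ := cluster_unique hGdo hT0cod hT j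
      exact ⟨j', by rw [← hj', hj]⟩
    · obtain ⟨j, hj⟩ := T0_cluster_surj2 hG hS hinj hmap himg hlen hL hnd f hf
      obtain ⟨j', hj'⟩ := cluster_unique hGdo hT0cod hT j
      exact ⟨j', by rw [← hj', hj]⟩
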